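/- (Generalized Schwarz mean value theorem) Let I be a real interval, let f₀, …, fₙ : I → ℝ be n times continuously differentiable on I, and let x₀, …, xₙ ∈ I. Then there exist points τ_{ij} ∈ I for 0 ≤ i, j ≤ n such that det[f_i(x_j)]_{0 ≤ i,j ≤ n} = det[f_i^{(j)}(τ_{ij})/j!]_{0 ≤ i,j ≤ n} · V(x₀, …, xₙ). -/

import Mathlib

open Set Finset Polynomial

namespace SchwarzAux

/-- Iterated divided-difference functions: `G X f k t = f[X 0, …, X (k-1), t]`. -/
noncomputable def G (X : ℕ → ℝ) (f : ℝ → ℝ) : ℕ → ℝ → ℝ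
  | 0 => f
  | (k+1) => fun t => (G X f k t - G X f k (X k)) / (t - X k)

/-- The divided difference `f[X 0, …, X k]`. -/
noncomputable def d (X : ℕ → ℝ) (f : ℝ → ℝ) (k : ℕ) : ℝ := G X f k (X k)

/-- Newton basis polynomial evaluated at `t`. -/
noncomputable def ω (X : ℕ → ℝ) (k : ℕ) (t : ℝ) : ℝ := ∏ l ∈ Finset.range k, (t - X l)

lemma omega_zero (X : ℕ → ℝ) {j k : ℕ} (h : j < k) : ω X k (X j) = 0 :=
  Finset.prod_eq_zero (Finset.mem_range.2 h) (sub_self _)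

lemma newton (X : ℕ → ℝ) (f : ℝ → ℝ) (m : ℕ) (t : ℝ) (ht : ∀ l < m, t ≠ X l) :
    f t = (∑ k ∈ Finset.range m, d X f k * ω X k t) + ω X m t * G X f m t := by
  induction m with
  | zero => simp [ω, G]
  | succ m ih =>
    have h1 := ih (fun l hl => ht l (Nat.lt_succ_of_lt hl))
    have h2 : t - X m ≠ 0 := sub_ne_zero.2 (ht m (Nat.lt_succ_self m))
    have h3 : G X f m t = d X f m + (t - X m) * G X f (m+1) t := by
      rw [G, d]
      field_simp
      ring
    rw [h1, h3, Finset.sum_range_succ]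
    have h4 : ω X (m+1) t = ω X m t * (t - X m) := by rw [ω, ω, Finset.prod_range_succ]
    rw [h4]; ring

lemma newton₂ (X : ℕ → ℝ) (f : ℝ → ℝ) (n : ℕ)
    (hX : ∀ a b : ℕ, a < b → b ≤ n → X a < X b) (j K : ℕ) (hj : j ≤ K) (hK : K ≤ n) :
    f (X j) = ∑ m ∈ Finset.range (K+1), d X f m * ω X m (X j) := by
  have hne : ∀ l < j, X j ≠ X l := fun l hl => ne_of_gt (hX l j hl (hj.trans hK))
  have hsub : ∑ m ∈ Finset.range (K+1), d X f m * ω X m (X j)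
      = ∑ m ∈ Finset.range (j+1), d X f m * ω X m (X j) := by
    refine (Finset.sum_subset (Finset.range_subset_range.2 (by omega)) ?_).symm
    intro m _ hm
    rw [omega_zero X (show j < m by simpa using Nat.lt_of_succ_le (not_lt.1 (by
      simpa [Finset.mem_range] using hm)))]
    ring
  rw [hsub, Finset.sum_range_succ, newton X f j (X j) hne,
    show G X f j (X j) = d X f j from rfl]
  ring

lemma iterRolle (I : Set ℝ) (hI : I.OrdConnected) :
    ∀ (k : ℕ) (H : ℕ → ℝ → ℝ),
    (∀ m ≤ k, ContinuousOn (H m) I) →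
    (∀ m < k, ∀ t ∈ interior I, HasDerivAt (H m) (H (m+1) t) t) →
    ∀ (y : Fin (k+1) → ℝ), StrictMono y → (∀ j, y j ∈ I) → (∀ j, H 0 (y j) = 0) →
    ∃ ξ ∈ I, H k ξ = 0 := by
  intro k
  induction k with
  | zero => exact fun H _ _ y _ hyI h0 => ⟨y 0, hyI 0, h0 0⟩
  | succ k ih =>
    intro H hc hd y hy hyI h0
    have step : ∀ j : Fin (k+1), ∃ c ∈ Ioo (y j.castSucc) (y j.succ), H 1 c = 0 := by
      intro j
      have hab : y j.castSucc < y j.succ := hy Fin.castSucc_lt_succ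
      have hIcc : Icc (y j.castSucc) (y j.succ) ⊆ I := hI.out (hyI _) (hyI _)
      have hIooint : Ioo (y j.castSucc) (y j.succ) ⊆ interior I :=
        interior_maximal (Ioo_subset_Icc_self.trans hIcc) isOpen_Ioo
      exact exists_hasDerivAt_eq_zero hab ((hc 0 (Nat.zero_le _)).mono hIcc)
        ((h0 _).trans (h0 _).symm)
        (fun t ht => hd 0 (Nat.succ_pos k) t (hIooint ht))
    choose z hz hz0 using step
    have hzI : ∀ j, z j ∈ I := fun j =>
      hI.out (hyI j.castSucc) (hyI j.succ) (Ioo_subset_Icc_self (hz j))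
    have hzmono : StrictMono z := by
      rw [Fin.strictMono_iff_lt_succ]
      intro i
      calc z i.castSucc < y i.castSucc.succ := (hz i.castSucc).2
        _ = y i.succ.castSucc := by rw [Fin.succ_castSucc]
        _ < z i.succ := (hz i.succ).1
    exact ih (fun m => H (m+1)) (fun m hm => hc (m+1) (by omega))
      (fun m hm t ht => hd (m+1) (by omega) t ht) z hzmono hzI hz0

lemma meanValue (I : Set ℝ) (hI : I.OrdConnected) (n : ℕ) (f : ℝ → ℝ)
    (hf : ContDiffOn ℝ n f I) (X : ℕ → ℝ) (hXI : ∀ m, X m ∈ I)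
    (hX : ∀ a b : ℕ, a < b → b ≤ n → X a < X b) (k : ℕ) (hk : k ≤ n) :
    ∃ ξ ∈ I, iteratedDerivWithin k f I ξ / (k.factorial : ℝ) = d X f k := by
  rcases Nat.eq_zero_or_pos k with rfl | hkpos
  · exact ⟨X 0, hXI 0, by simp [d, G]⟩
  -- now 1 ≤ k
  have hconv : Convex ℝ I := convex_iff_ordConnected.2 hI
  have hX0k : X 0 < X k := hX 0 k hkpos hk
  have hIoo : Ioo (X 0) (X k) ⊆ interior I :=
    interior_maximal (Ioo_subset_Icc_self.trans (hI.out (hXI 0) (hXI k))) isOpen_Ioo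
  have hne : (interior I).Nonempty := (Set.nonempty_Ioo.2 hX0k).mono hIoo
  have hud : UniqueDiffOn ℝ I := uniqueDiffOn_convex hconv hne
  set Q : ℕ → ℝ[X] := fun m => ∏ l ∈ Finset.range m, (Polynomial.X - C (X l)) with hQ
  have hQmonic : ∀ m, (Q m).Monic := fun m =>
    monic_prod_of_monic _ _ fun l _ => monic_X_sub_C (X l)
  have hQdeg : ∀ m, (Q m).natDegree = m := by
    intro m
    rw [hQ]
    rw [Polynomial.natDegree_prod _ _ (fun l _ => (monic_X_sub_C (X l)).ne_zero)]
    simp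
  set P : ℝ[X] := ∑ m ∈ Finset.range (k+1), C (d X f m) * Q m with hP
  have hPeval : ∀ t, P.eval t = ∑ m ∈ Finset.range (k+1), d X f m * ω X m t := by
    intro t
    rw [hP, Polynomial.eval_finset_sum]
    refine Finset.sum_congr rfl fun m _ => ?_
    simp [hQ, ω, Polynomial.eval_prod]
  have hPdeg : P.natDegree ≤ k := by
    refine Polynomial.natDegree_sum_le_of_forall_le _ _ fun m hm => ?_
    refine (Polynomial.natDegree_C_mul_le _ _).trans ?_
    rw [hQdeg m]
    exact Nat.lt_succ_iff.1 (Finset.mem_range.1 hm)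
  have hPcoeff : P.coeff k = d X f k := by
    rw [hP, Polynomial.finset_sum_coeff, Finset.sum_range_succ]
    have h1 : ∀ m ∈ Finset.range k, (C (d X f m) * Q m).coeff k = 0 := by
      intro m hm
      refine Polynomial.coeff_eq_zero_of_natDegree_lt ?_
      exact lt_of_le_of_lt ((Polynomial.natDegree_C_mul_le _ _).trans_eq (hQdeg m))
        (Finset.mem_range.1 hm)
    rw [Finset.sum_eq_zero h1, Polynomial.coeff_C_mul]
    have : (Q k).coeff k = 1 := by
      have := (hQmonic k).coeff_natDegree
      rwa [hQdeg k] at this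
    rw [this]; ring
  have hPk : derivative^[k] P = C ((k.factorial : ℝ) * d X f k) := by
    have h1 : (derivative^[k] P).natDegree ≤ 0 := by
      have := Polynomial.natDegree_iterate_derivative P k
      omega
    rw [Polynomial.eq_C_of_natDegree_le_zero h1, Polynomial.coeff_iterate_derivative]
    simp [Nat.descFactorial_self, hPcoeff, nsmul_eq_mul]
  -- the chain of functions
  set H : ℕ → ℝ → ℝ := fun m t => iteratedDerivWithin m f I t - (derivative^[m] P).eval t
    with hH
  have hc : ∀ m ≤ k, ContinuousOn (H m) I := by
    intro m hm
    refine ContinuousOn.sub ?_ (Polynomial.continuous _).continuousOn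
    exact hf.continuousOn_iteratedDerivWithin (by exact_mod_cast hm.trans hk) hud
  have hd : ∀ m < k, ∀ t ∈ interior I, HasDerivAt (H m) (H (m+1) t) t := by
    intro m hm t ht
    have htI : I ∈ nhds t := mem_interior_iff_mem_nhds.1 ht
    have htmem : t ∈ I := mem_of_mem_nhds htI
    have hdm : DifferentiableWithinAt ℝ (iteratedDerivWithin m f I) I t :=
      hf.differentiableOn_iteratedDerivWithin (by exact_mod_cast hm.trans_le hk) hud t htmem
    have hda : DifferentiableAt ℝ (iteratedDerivWithin m f I) t := hdm.differentiableAt htI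
    have hval : deriv (iteratedDerivWithin m f I) t = iteratedDerivWithin (m+1) f I t := by
      rw [← derivWithin_of_mem_nhds htI, ← iteratedDerivWithin_succ]
    have h1 : HasDerivAt (iteratedDerivWithin m f I) (iteratedDerivWithin (m+1) f I t) t := by
      rw [← hval]; exact hda.hasDerivAt
    have h2 : HasDerivAt (fun s => (derivative^[m] P).eval s)
        ((derivative^[m+1] P).eval t) t := by
      rw [Function.iterate_succ_apply']
      exact Polynomial.hasDerivAt _ t
    exact h1.sub h2
  have h0 : ∀ j : Fin (k+1), H 0 (X (j : ℕ)) = 0 := by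
    intro j
    have hj : (j : ℕ) ≤ k := Nat.lt_succ_iff.1 j.isLt
    simp only [hH, iteratedDerivWithin_zero, Function.iterate_zero, id_eq]
    rw [hPeval, ← newton₂ X f n hX (j : ℕ) k hj hk]
    ring
  obtain ⟨ξ, hξI, hξ⟩ := iterRolle I hI k H hc hd (fun j => X (j : ℕ))
    (fun a b hab => hX a b hab ((Nat.lt_succ_iff.1 b.isLt).trans hk))
    (fun j => hXI _) h0
  refine ⟨ξ, hξI, ?_⟩
  have : iteratedDerivWithin k f I ξ = (k.factorial : ℝ) * d X f k := by
    have := hξ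
    rw [hH] at this
    simp only [hPk, Polynomial.eval_C] at this
    linarith
  rw [this]
  field_simp

lemma mainMono (n : ℕ) (I : Set ℝ) (hI : I.OrdConnected)
    (f : Fin (n+1) → ℝ → ℝ) (hf : ∀ i, ContDiffOn ℝ n (f i) I)
    (x : Fin (n+1) → ℝ) (hmono : StrictMono x) (hx : ∀ i, x i ∈ I) :
    ∃ τ : Fin (n+1) → Fin (n+1) → ℝ, (∀ i j, τ i j ∈ I) ∧
      Matrix.det (Matrix.of fun i j : Fin (n+1) => f i (x j)) =
        Matrix.det (Matrix.of fun i j : Fin (n+1) =>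
            iteratedDerivWithin (j : ℕ) (f i) I (τ i j) / ((j : ℕ).factorial : ℝ)) *
          ∏ i : Fin (n+1), ∏ j ∈ Finset.Ioi i, (x j - x i) := by
  set X : ℕ → ℝ := fun m => x ⟨min m n, Nat.lt_succ_of_le (min_le_right m n)⟩ with hXdef
  have hXx : ∀ j : Fin (n+1), X (j : ℕ) = x j := by
    intro j
    have : (⟨min (j : ℕ) n, Nat.lt_succ_of_le (min_le_right _ n)⟩ : Fin (n+1)) = j :=
      Fin.ext (Nat.min_eq_left (Nat.lt_succ_iff.1 j.isLt))
    rw [hXdef]; simp only []; rw [this]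
  have hXI : ∀ m, X m ∈ I := fun m => hx _
  have hX : ∀ a b : ℕ, a < b → b ≤ n → X a < X b := by
    intro a b hab hb
    apply hmono
    rw [Fin.lt_def]
    simp only []
    omega
  have hMV : ∀ (i j : Fin (n+1)), ∃ ξ ∈ I,
      iteratedDerivWithin (j : ℕ) (f i) I ξ / ((j : ℕ).factorial : ℝ) = d X (f i) (j : ℕ) :=
    fun i j => meanValue I hI n (f i) (hf i) X hXI hX (j : ℕ) (Nat.lt_succ_iff.1 j.isLt)
  choose τ hτI hτ using hMV
  refine ⟨τ, hτI, ?_⟩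
  have key : (Matrix.of fun i j : Fin (n+1) => f i (x j)) =
      (Matrix.of fun i k : Fin (n+1) => d X (f i) (k : ℕ)) *
      (Matrix.of fun k j : Fin (n+1) => ω X (k : ℕ) (x j)) := by
    ext i j
    rw [Matrix.mul_apply]
    simp only [Matrix.of_apply]
    rw [← hXx j, newton₂ X (f i) n hX (j : ℕ) n (Nat.lt_succ_iff.1 j.isLt) le_rfl,
      ← Fin.sum_univ_eq_sum_range (fun m => d X (f i) m * ω X m (X (j : ℕ)))]
  have hNtri : (Matrix.of fun k j : Fin (n+1) => ω X (k : ℕ) (x j)).BlockTriangular id := by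
    intro k j hjk
    rw [Matrix.of_apply, ← hXx j]
    exact omega_zero X hjk
  have hdetN : (Matrix.of fun k j : Fin (n+1) => ω X (k : ℕ) (x j)).det
      = ∏ k : Fin (n+1), ω X (k : ℕ) (x k) := Matrix.det_of_upperTriangular hNtri
  have h1 : ∀ k : Fin (n+1), ω X (k : ℕ) (x k) = ∏ j ∈ Finset.Iio k, (x k - x j) := by
    intro k
    rw [ω, ← Nat.Iio_eq_range, ← Fin.map_valEmbedding_Iio, Finset.prod_map]
    exact Finset.prod_congr rfl fun j _ => by
      rw [Fin.valEmbedding_apply, hXx j]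
  have hdiag : ∏ k : Fin (n+1), ω X (k : ℕ) (x k)
      = ∏ i : Fin (n+1), ∏ j ∈ Finset.Ioi i, (x j - x i) := by
    rw [Finset.prod_congr rfl fun k _ => h1 k]
    exact Finset.prod_comm' (fun a b => by
      simp only [Finset.mem_univ, Finset.mem_Iio, Finset.mem_Ioi, true_and, and_true])
  have hD : (Matrix.of fun i k : Fin (n+1) => d X (f i) (k : ℕ)) =
      Matrix.of fun i k : Fin (n+1) =>
        iteratedDerivWithin (k : ℕ) (f i) I (τ i k) / ((k : ℕ).factorial : ℝ) := by
    ext i k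
    exact (hτ i k).symm
  rw [key, Matrix.det_mul, hdetN, hdiag, hD]

end SchwarzAux

/-- Generalized Schwarz mean value theorem: for `f₀, …, fₙ` of class `C^n` on an
interval `I` and points `x₀, …, xₙ ∈ I`, there exist `τᵢⱼ ∈ I` with
`det[fᵢ(xⱼ)] = det[fᵢ⁽ʲ⁾(τᵢⱼ)/j!] · V(x₀, …, xₙ)`. -/
theorem generalized_schwarz_mvt (n : ℕ) (I : Set ℝ) (hI : I.OrdConnected)
    (f : Fin (n + 1) → ℝ → ℝ) (hf : ∀ i, ContDiffOn ℝ n (f i) I)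
    (x : Fin (n + 1) → ℝ) (hx : ∀ i, x i ∈ I) :
    ∃ τ : Fin (n + 1) → Fin (n + 1) → ℝ, (∀ i j, τ i j ∈ I) ∧
      Matrix.det (Matrix.of fun i j : Fin (n + 1) => f i (x j)) =
        Matrix.det (Matrix.of fun i j : Fin (n + 1) =>
            iteratedDerivWithin (j : ℕ) (f i) I (τ i j) / ((j : ℕ).factorial : ℝ)) *
          ∏ i : Fin (n + 1), ∏ j ∈ Finset.Ioi i, (x j - x i) := by
  by_cases hinj : Function.Injective x
  · set σ := Tuple.sort x with hσ
    have hsm : StrictMono (x ∘ σ) :=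
      (Tuple.monotone_sort x).strictMono_of_injective (hinj.comp σ.injective)
    obtain ⟨τ, hτI, hτ⟩ := SchwarzAux.mainMono n I hI f hf (x ∘ σ) hsm (fun i => hx _)
    refine ⟨τ, hτI, ?_⟩
    set M : Matrix (Fin (n+1)) (Fin (n+1)) ℝ := Matrix.of fun i j => f i (x j) with hM
    set D : Matrix (Fin (n+1)) (Fin (n+1)) ℝ := Matrix.of fun i j =>
      iteratedDerivWithin (j : ℕ) (f i) I (τ i j) / ((j : ℕ).factorial : ℝ) with hD
    have h1 : (Matrix.of fun i j : Fin (n+1) => f i ((x ∘ σ) j)).det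
        = (Equiv.Perm.sign σ : ℝ) * M.det := by
      have := Matrix.det_permute' σ M
      rw [← this]
      congr 1
    have h2 : ∏ i : Fin (n+1), ∏ j ∈ Finset.Ioi i, ((x ∘ σ) j - (x ∘ σ) i)
        = (Equiv.Perm.sign σ : ℝ) * ∏ i : Fin (n+1), ∏ j ∈ Finset.Ioi i, (x j - x i) := by
      rw [← Matrix.det_vandermonde, ← Matrix.det_vandermonde]
      have hv : Matrix.vandermonde (x ∘ σ) = (Matrix.vandermonde x).submatrix σ id := by
        ext i j; rfl
      rw [hv, Matrix.det_permute]
    rw [h1, h2] at hτ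
    have hs : (Equiv.Perm.sign σ : ℝ) ≠ 0 := by
      rcases Int.units_eq_one_or (Equiv.Perm.sign σ) with h | h <;> rw [h] <;> norm_num
    apply mul_left_cancel₀ hs
    rw [hτ]; ring
  · rw [Function.not_injective_iff] at hinj
    obtain ⟨a, b, hab, hne⟩ := hinj
    refine ⟨fun _ _ => x 0, fun _ _ => hx 0, ?_⟩
    have hdet : (Matrix.of fun i j : Fin (n+1) => f i (x j)).det = 0 := by
      apply Matrix.det_zero_of_column_eq hne
      intro i
      simp [hab]
    have hprod : ∏ i : Fin (n+1), ∏ j ∈ Finset.Ioi i, (x j - x i) = 0 := by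
      rcases lt_or_gt_of_ne hne with h | h
      · exact Finset.prod_eq_zero (Finset.mem_univ a)
          (Finset.prod_eq_zero (Finset.mem_Ioi.2 h) (by rw [hab, sub_self]))
      · exact Finset.prod_eq_zero (Finset.mem_univ b)
          (Finset.prod_eq_zero (Finset.mem_Ioi.2 h) (by rw [hab, sub_self]))
    rw [hdet, hprod, mul_zero]
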